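/- arXiv:2105.00238 — 7 statements merged into one kernel-verified Lean document; each statement's English description precedes it below -/
import Mathlib

section
/- The map V(x,y,u,v) = (x - βx(u+qy), y - ay + βx(u+qy), u - bu + ay, v + bu) maps the 3-dimensional simplex S³ = {(x,y,u,v) : x,y,u,v ≥ 0, x+y+u+v = 1} into itself if and only if a, b, β ∈ [0,1] and βq ≤ 1. -/
/-- The 3-dimensional simplex in ℝ⁴. -/
def Simplex3 : Set (ℝ × ℝ × ℝ × ℝ) :=
  {p | 0 ≤ p.1 ∧ 0 ≤ p.2.1 ∧ 0 ≤ p.2.2.1 ∧ 0 ≤ p.2.2.2 ∧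
       p.1 + p.2.1 + p.2.2.1 + p.2.2.2 = 1}

/-- The discrete-time SEIR operator. -/
def seirV (a b β q : ℝ) (p : ℝ × ℝ × ℝ × ℝ) : ℝ × ℝ × ℝ × ℝ :=
  (p.1 - β * p.1 * (p.2.2.1 + q * p.2.1),
   p.2.1 - a * p.2.1 + β * p.1 * (p.2.2.1 + q * p.2.1),
   p.2.2.1 - b * p.2.2.1 + a * p.2.1,
   p.2.2.2 + b * p.2.2.1)

theorem stmt_0 (a b β q : ℝ) (ha : 0 < a) (hb : 0 < b) (hβ : 0 ≤ β) (hq : 0 ≤ q) :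
    (∀ p ∈ Simplex3, seirV a b β q p ∈ Simplex3) ↔
      (a ≤ 1 ∧ b ≤ 1 ∧ β ≤ 1 ∧ β * q ≤ 1) := by
  constructor
  · intro h
    refine ⟨?_, ?_, ?_, ?_⟩
    · have := h (0, 1, 0, 0) (by norm_num [Simplex3])
      simp only [Simplex3, seirV, Set.mem_setOf_eq] at this
      linarith [this.2.1]
    · have := h (0, 0, 1, 0) (by norm_num [Simplex3])
      simp only [Simplex3, seirV, Set.mem_setOf_eq] at this
      linarith [this.2.2.1]
    · by_contra hβ1
      push_neg at hβ1
      have hβ0 : 0 < β := by linarith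
      have := h ((β - 1) / (2 * β), 0, (β + 1) / (2 * β), 0)
        (by
          refine ⟨div_nonneg (by linarith) (by linarith), le_refl 0, div_nonneg (by linarith) (by linarith), le_refl 0, ?_⟩
          field_simp
          ring)
      simp only [Simplex3, seirV, Set.mem_setOf_eq] at this
      have h1 := this.1
      have hx : 0 < (β - 1) / (2 * β) := div_pos (by linarith) (by linarith)
      have hu : 1 < β * ((β + 1) / (2 * β) + q * 0) := by
        rw [mul_zero, add_zero]
        rw [mul_div_assoc']
        rw [lt_div_iff₀ (by positivity)]
        nlinarith
      nlinarith
    · by_contra hqβ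
      push_neg at hqβ
      have hβ0 : 0 < β := by nlinarith
      have hq0 : 0 < q := by nlinarith
      have := h ((β * q - 1) / (2 * (β * q)), (β * q + 1) / (2 * (β * q)), 0, 0)
        (by
          refine ⟨div_nonneg (by nlinarith) (by nlinarith), div_nonneg (by nlinarith) (by nlinarith), le_refl 0, le_refl 0, ?_⟩
          field_simp
          ring)
      simp only [Simplex3, seirV, Set.mem_setOf_eq] at this
      have h1 := this.1
      have hx : 0 < (β * q - 1) / (2 * (β * q)) := div_pos (by nlinarith) (by nlinarith)
      have hu : 1 < β * (0 + q * ((β * q + 1) / (2 * (β * q)))) := by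
        rw [zero_add, ← mul_assoc, mul_div_assoc']
        rw [lt_div_iff₀ (by positivity)]
        nlinarith
      nlinarith
  · rintro ⟨ha1, hb1, hβ1, hqβ⟩ p ⟨hx, hy, hu, hv, hs⟩
    obtain ⟨x, y, u, v⟩ := p
    simp only at hx hy hu hv hs
    have key : β * (u + q * y) ≤ 1 := by nlinarith
    refine ⟨?_, ?_, ?_, ?_, ?_⟩
    · show 0 ≤ x - β * x * (u + q * y)
      nlinarith
    · show 0 ≤ y - a * y + β * x * (u + q * y)
      have : 0 ≤ β * x * (u + q * y) := by positivity
      nlinarith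
    · show 0 ≤ u - b * u + a * y
      nlinarith
    · show (0:ℝ) ≤ v + b * u
      nlinarith
    · show x - β * x * (u + q * y) + (y - a * y + β * x * (u + q * y)) + (u - b * u + a * y) + (v + b * u) = 1
      linarith
end

section
/- If a, b, β ∈ [0,1] and βq ≤ 1, then for every initial point λ⁰ in the simplex S³, the sequence of iterates Vⁿ(λ⁰) converges (i.e., the operator V is regular). -/
/-- Regularity: every trajectory converges. -/
theorem stmt_1 (a b β q : ℝ) (ha : 0 < a) (ha1 : a ≤ 1) (hb : 0 < b) (hb1 : b ≤ 1)
    (hβ : 0 ≤ β) (hβ1 : β ≤ 1) (hq : 0 ≤ q) (hβq : β * q ≤ 1)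
    (lam0 : ℝ × ℝ × ℝ × ℝ) (hlam : lam0 ∈ Simplex3) :
    ∃ L : ℝ × ℝ × ℝ × ℝ,
      Filter.Tendsto (fun n => (seirV a b β q)^[n] lam0) Filter.atTop (nhds L) := by
  set p : ℕ → ℝ × ℝ × ℝ × ℝ := fun n => (seirV a b β q)^[n] lam0 with hp
  have hstep : ∀ n, p (n + 1) = seirV a b β q (p n) := by
    intro n; simp [hp, Function.iterate_succ_apply']
  -- invariance of the simplex
  have hinv : ∀ n, p n ∈ Simplex3 := by
    intro n
    induction n with
    | zero => simpa [hp] using hlam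
    | succ n ih =>
      obtain ⟨hx, hy, hu, hv, hs⟩ := ih
      rw [hstep n]
      refine ⟨?_, ?_, ?_, ?_, ?_⟩ <;> simp only [seirV]
      · nlinarith [mul_nonneg hβ hu, mul_nonneg (mul_nonneg hβ hq) hy,
          mul_nonneg hx (show (0:ℝ) ≤ 1 - β * (p n).2.2.1 - β * q * (p n).2.1 by nlinarith)]
      · nlinarith [mul_nonneg (mul_nonneg hβ hx) (add_nonneg hu (mul_nonneg hq hy))]
      · nlinarith [mul_nonneg ha.le hy]
      · nlinarith [mul_nonneg hb.le hu]
      · ring_nf; linarith [hs]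
  set X : ℕ → ℝ := fun n => (p n).1 with hX
  set Y : ℕ → ℝ := fun n => (p n).2.1 with hY
  set U : ℕ → ℝ := fun n => (p n).2.2.1 with hU
  set W : ℕ → ℝ := fun n => (p n).2.2.2 with hW
  have hXrec : ∀ n, X (n + 1) = X n - β * X n * (U n + q * Y n) := by
    intro n; simp only [hX, hU, hY, hstep n, seirV]
  have hYrec : ∀ n, Y (n + 1) = Y n - a * Y n + β * X n * (U n + q * Y n) := by
    intro n; simp only [hX, hU, hY, hstep n, seirV]
  have hWrec : ∀ n, W (n + 1) = W n + b * U n := by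
    intro n; simp only [hW, hU, hstep n, seirV]
  have hXnn : ∀ n, 0 ≤ X n := fun n => (hinv n).1
  have hYnn : ∀ n, 0 ≤ Y n := fun n => (hinv n).2.1
  have hUnn : ∀ n, 0 ≤ U n := fun n => (hinv n).2.2.1
  have hW1 : ∀ n, W n ≤ 1 := by
    intro n; have h := (hinv n).2.2.2.2; linarith [hXnn n, hYnn n, hUnn n]
  have hεnn : ∀ n, 0 ≤ β * X n * (U n + q * Y n) := fun n =>
    mul_nonneg (mul_nonneg hβ (hXnn n)) (add_nonneg (hUnn n) (mul_nonneg hq (hYnn n)))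
  -- X is antitone, bounded below → converges
  have hXanti : Antitone X := by
    apply antitone_nat_of_succ_le
    intro n; rw [hXrec n]; linarith [hεnn n]
  have hXbdd : BddBelow (Set.range X) := ⟨0, by rintro _ ⟨n, rfl⟩; exact hXnn n⟩
  have hXconv : Filter.Tendsto X Filter.atTop (nhds (⨅ n, X n)) :=
    tendsto_atTop_ciInf hXanti hXbdd
  -- W is monotone, bounded above → converges
  have hWmono : Monotone W := by
    apply monotone_nat_of_le_succ
    intro n; rw [hWrec n]; nlinarith [mul_nonneg hb.le (hUnn n)]
  have hWbdd : BddAbove (Set.range W) := ⟨1, by rintro _ ⟨n, rfl⟩; exact hW1 n⟩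
  have hWconv : Filter.Tendsto W Filter.atTop (nhds (⨆ n, W n)) :=
    tendsto_atTop_ciSup hWmono hWbdd
  set x0 : ℝ := ⨅ n, X n
  set w0 : ℝ := ⨆ n, W n
  have hXshift : Filter.Tendsto (fun n => X (n + 1)) Filter.atTop (nhds x0) :=
    hXconv.comp (Filter.tendsto_add_atTop_nat 1)
  have hWshift : Filter.Tendsto (fun n => W (n + 1)) Filter.atTop (nhds w0) :=
    hWconv.comp (Filter.tendsto_add_atTop_nat 1)
  -- increments tend to 0
  have hεto0 : Filter.Tendsto (fun n => β * X n * (U n + q * Y n)) Filter.atTop (nhds 0) := by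
    have := hXconv.sub hXshift
    simp only [sub_self] at this
    convert this using 2 with n
    rw [hXrec n]; ring
  have hbUto0 : Filter.Tendsto (fun n => b * U n) Filter.atTop (nhds 0) := by
    have := hWshift.sub hWconv
    simp only [sub_self] at this
    convert this using 2 with n
    rw [hWrec n]; ring
  have hUto0 : Filter.Tendsto U Filter.atTop (nhds 0) := by
    have := hbUto0.const_mul b⁻¹
    simp only [mul_zero] at this
    convert this using 2 with n
    field_simp
  -- Y converges (since Y = 1 - X - U - W)
  have hYeq : ∀ n, Y n = 1 - X n - U n - W n := by
    intro n; have h := (hinv n).2.2.2.2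
    simp only [hX, hY, hU, hW] at *; linarith
  set y0 : ℝ := 1 - x0 - 0 - w0
  have hYconv : Filter.Tendsto Y Filter.atTop (nhds y0) := by
    have : Filter.Tendsto (fun n => 1 - X n - U n - W n) Filter.atTop (nhds y0) :=
      ((tendsto_const_nhds.sub hXconv).sub hUto0).sub hWconv
    convert this using 2 with n
    exact hYeq n
  have hYshift : Filter.Tendsto (fun n => Y (n + 1)) Filter.atTop (nhds y0) :=
    hYconv.comp (Filter.tendsto_add_atTop_nat 1)
  -- limit of Y is 0
  have hy00 : y0 = 0 := by
    have h2 : Filter.Tendsto (fun n => Y (n + 1)) Filter.atTop (nhds (y0 - a * y0 + 0)) := by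
      have := (hYconv.sub (hYconv.const_mul a)).add hεto0
      convert this using 2 with n
      rw [hYrec n]
    have := tendsto_nhds_unique hYshift h2
    nlinarith
  rw [hy00] at hYconv
  refine ⟨(x0, 0, 0, w0), ?_⟩
  have : Filter.Tendsto (fun n => (X n, Y n, U n, W n)) Filter.atTop
      (nhds (x0, (0:ℝ), (0:ℝ), w0)) :=
    hXconv.prodMk_nhds (hYconv.prodMk_nhds (hUto0.prodMk_nhds hWconv))
  exact this
end

section
/- The set of fixed points of the SEIR operator V on S³ with a > 0, b > 0, β > 0 is exactly {(x, 0, 0, 1-x) : x ∈ [0,1]}. -/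
theorem stmt_4 (a b β q : ℝ) (ha : 0 < a) (hb : 0 < b) (hβ : 0 < β) (hq : 0 ≤ q) :
    {p ∈ Simplex3 | seirV a b β q p = p} =
      {p : ℝ × ℝ × ℝ × ℝ | ∃ x ∈ Set.Icc (0:ℝ) 1, p = (x, 0, 0, 1 - x)} := by
  ext ⟨x, y, u, v⟩
  simp only [Set.mem_setOf_eq, Simplex3, seirV, Prod.mk.injEq, Set.mem_Icc]
  constructor
  · rintro ⟨⟨hx, hy, hu, hv, hs⟩, h1, h2, h3, h4⟩
    have hu0 : u = 0 := by nlinarith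
    have hy0 : y = 0 := by nlinarith
    exact ⟨x, ⟨hx, by nlinarith⟩, rfl, hy0, hu0, by nlinarith⟩
  · rintro ⟨t, ⟨ht0, ht1⟩, rfl, rfl, rfl, rfl⟩
    refine ⟨⟨ht0, by norm_num, by norm_num, by linarith, by ring⟩, by ring, by ring, by ring, by ring⟩
end

section
/- For any initial point λ⁰ in S³ and parameters satisfying a, b ∈ (0,1], β ∈ (0,1], βq ≤ 1, the second and third coordinates of the trajectory satisfy lim y⁽ⁿ⁾ = lim u⁽ⁿ⁾ = 0. -/
open Filter

/-- Invariance of the simplex. -/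
lemma seirV_mem (a b β q : ℝ) (ha : 0 < a) (ha1 : a ≤ 1) (hb : 0 < b) (hb1 : b ≤ 1)
    (hβ : 0 < β) (hβ1 : β ≤ 1) (hq : 0 ≤ q) (hβq : β * q ≤ 1)
    (p : ℝ × ℝ × ℝ × ℝ) (hp : p ∈ Simplex3) : seirV a b β q p ∈ Simplex3 := by
  obtain ⟨hx, hy, hu, hv, hs⟩ := hp
  have h1 : β * (p.2.2.1 + q * p.2.1) ≤ 1 := by nlinarith
  refine ⟨?_, ?_, ?_, ?_, ?_⟩
  · have := mul_nonneg hx (sub_nonneg.2 h1)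
    simp only [seirV]; nlinarith
  · simp only [seirV]
    have h2 : 0 ≤ β * p.1 * (p.2.2.1 + q * p.2.1) :=
      mul_nonneg (mul_nonneg hβ.le hx) (by nlinarith)
    nlinarith
  · simp only [seirV]; nlinarith
  · simp only [seirV]; nlinarith
  · simp only [seirV]; ring_nf; linarith

/-- If `z (n+1) = c * z n + d n` with `0 ≤ c < 1`, `z n ≥ 0`, `d n ≥ 0`, `d → 0`,
then `z → 0`. -/
lemma decay_lemma (c : ℝ) (hc0 : 0 ≤ c) (hc1 : c < 1) (z d : ℕ → ℝ)
    (hz : ∀ n, 0 ≤ z n) (hd0 : ∀ n, 0 ≤ d n)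
    (hrec : ∀ n, z (n + 1) = c * z n + d n)
    (hd : Tendsto d atTop (nhds 0)) : Tendsto z atTop (nhds 0) := by
  rw [Metric.tendsto_atTop]
  intro ε hε
  have h1c : 0 < 1 - c := by linarith
  set δ : ℝ := ε * (1 - c) / 2 with hδdef
  have hδ : 0 < δ := by positivity
  obtain ⟨N, hN⟩ := (Metric.tendsto_atTop.1 hd) δ hδ
  have key : ∀ m, z (N + m) ≤ c ^ m * z N + ε / 2 := by
    intro m
    induction m with
    | zero => simp; nlinarith [hz N]
    | succ m ih =>
      have hdN : d (N + m) < δ := by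
        have h := hN (N + m) (Nat.le_add_right N m)
        rw [Real.dist_eq, sub_zero] at h
        exact lt_of_le_of_lt (le_abs_self _) h
      have : z (N + (m + 1)) = c * z (N + m) + d (N + m) := by
        rw [← hrec (N + m)]; ring_nf
      rw [this]
      have hcm : 0 ≤ c ^ m * z N := mul_nonneg (pow_nonneg hc0 m) (hz N)
      have : c * z (N + m) ≤ c * (c ^ m * z N + ε / 2) :=
        mul_le_mul_of_nonneg_left ih hc0
      have hδhalf : δ ≤ (1 - c) * (ε / 2) := by rw [hδdef]; ring_nf; nlinarith
      calc c * z (N + m) + d (N + m)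
          ≤ c * (c ^ m * z N + ε / 2) + δ := by linarith
        _ ≤ c ^ (m + 1) * z N + ε / 2 := by ring_nf; nlinarith
  -- now pick M so that c ^ m * z N < ε/2
  have hpow : Tendsto (fun m => c ^ m * z N) atTop (nhds 0) := by
    simpa using (tendsto_pow_atTop_nhds_zero_of_lt_one hc0 hc1).mul_const (z N)
  obtain ⟨M, hM⟩ := (Metric.tendsto_atTop.1 hpow) (ε / 2) (by positivity)
  refine ⟨N + M, fun n hn => ?_⟩
  have hmn : n = N + (n - N) := by omega
  have h1 : z n ≤ c ^ (n - N) * z N + ε / 2 := by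
    have h := key (n - N); rwa [← hmn] at h
  have h2 : c ^ (n - N) * z N < ε / 2 := by
    have := hM (n - N) (by omega)
    rwa [Real.dist_eq, sub_zero, abs_of_nonneg (mul_nonneg (pow_nonneg hc0 _) (hz N))] at this
  rw [Real.dist_eq, sub_zero, abs_of_nonneg (hz n)]
  linarith

theorem stmt_5 (a b β q : ℝ) (ha : 0 < a) (ha1 : a ≤ 1) (hb : 0 < b) (hb1 : b ≤ 1)
    (hβ : 0 < β) (hβ1 : β ≤ 1) (hq : 0 ≤ q) (hβq : β * q ≤ 1)
    (lam0 : ℝ × ℝ × ℝ × ℝ) (hlam : lam0 ∈ Simplex3) :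
    Filter.Tendsto (fun n => ((seirV a b β q)^[n] lam0).2.1) Filter.atTop (nhds 0) ∧
    Filter.Tendsto (fun n => ((seirV a b β q)^[n] lam0).2.2.1) Filter.atTop (nhds 0) := by
  set orb : ℕ → ℝ × ℝ × ℝ × ℝ := fun n => (seirV a b β q)^[n] lam0 with horb
  have hmem : ∀ n, orb n ∈ Simplex3 := by
    intro n
    induction n with
    | zero => simpa [horb] using hlam
    | succ n ih =>
      have : orb (n + 1) = seirV a b β q (orb n) := by
        simp [horb, Function.iterate_succ_apply']
      rw [this]
      exact seirV_mem a b β q ha ha1 hb hb1 hβ hβ1 hq hβq _ ih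
  set x : ℕ → ℝ := fun n => (orb n).1 with hx
  set y : ℕ → ℝ := fun n => (orb n).2.1 with hy
  set u : ℕ → ℝ := fun n => (orb n).2.2.1 with hu
  have hstep : ∀ n, orb (n + 1) = seirV a b β q (orb n) := by
    intro n; simp [horb, Function.iterate_succ_apply']
  have hxrec : ∀ n, x (n + 1) = x n - β * x n * (u n + q * y n) := by
    intro n; simp only [hx, hy, hu, hstep n, seirV]
  have hyrec : ∀ n, y (n + 1) = (1 - a) * y n + β * x n * (u n + q * y n) := by
    intro n; simp only [hy, hx, hu, hstep n, seirV]; ring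
  have hurec : ∀ n, u (n + 1) = (1 - b) * u n + a * y n := by
    intro n; simp only [hu, hy, hstep n, seirV]; ring
  have hxnn : ∀ n, 0 ≤ x n := fun n => (hmem n).1
  have hynn : ∀ n, 0 ≤ y n := fun n => (hmem n).2.1
  have hunn : ∀ n, 0 ≤ u n := fun n => (hmem n).2.2.1
  have hdnn : ∀ n, 0 ≤ β * x n * (u n + q * y n) := fun n =>
    mul_nonneg (mul_nonneg hβ.le (hxnn n))
      (add_nonneg (hunn n) (mul_nonneg hq (hynn n)))
  -- x is antitone and bounded below, hence converges
  have hxanti : Antitone x := antitone_nat_of_succ_le fun n => by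
    have := hdnn n; rw [hxrec n]; linarith
  have hxbdd : BddBelow (Set.range x) := ⟨0, by rintro _ ⟨n, rfl⟩; exact hxnn n⟩
  have hxconv : Tendsto x atTop (nhds (⨅ n, x n)) := tendsto_atTop_ciInf hxanti hxbdd
  have hxconv' : Tendsto (fun n => x (n + 1)) atTop (nhds (⨅ n, x n)) :=
    hxconv.comp (tendsto_add_atTop_nat 1)
  have hdtend : Tendsto (fun n => β * x n * (u n + q * y n)) atTop (nhds 0) := by
    have : Tendsto (fun n => x n - x (n + 1)) atTop (nhds ((⨅ n, x n) - ⨅ n, x n)) :=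
      hxconv.sub hxconv'
    rw [sub_self] at this
    refine this.congr fun n => ?_
    rw [hxrec n]; ring
  have hytend : Tendsto y atTop (nhds 0) :=
    decay_lemma (1 - a) (by linarith) (by linarith) y _ hynn hdnn hyrec hdtend
  refine ⟨hytend, ?_⟩
  have haytend : Tendsto (fun n => a * y n) atTop (nhds 0) := by
    simpa using hytend.const_mul a
  exact decay_lemma (1 - b) (by linarith) (by linarith) u _ hunn
    (fun n => mul_nonneg ha.le (hynn n)) hurec haytend
end

section
/- The Jacobian matrix of the 3-dimensional SEIR map W at any fixed point (x*, 0, 0) has 1 as an eigenvalue; consequently every fixed point (x*, 0, 0), x* ∈ [0,1], is nonhyperbolic. -/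
/-- Jacobian of the 3-dimensional SEIR map W at the fixed point (x*, 0, 0). -/
def seirJacobian (a b β q x : ℝ) : Matrix (Fin 3) (Fin 3) ℝ :=
  !![1, -β * q * x, -β * x;
     0, 1 - a + β * q * x, β * x;
     0, a, 1 - b]

theorem stmt_6 (a b β q x : ℝ) (ha : 0 < a) (ha1 : a ≤ 1) (hb : 0 < b) (hb1 : b ≤ 1)
    (hβ : 0 < β) (hβ1 : β ≤ 1) (hq : 0 ≤ q) (hβq : β * q ≤ 1)
    (hx : x ∈ Set.Icc (0:ℝ) 1) :
    Module.End.HasEigenvalue (Matrix.toLin' (seirJacobian a b β q x)) 1 ∧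
    ∃ μ : ℂ, Module.End.HasEigenvalue
        (Matrix.toLin' ((seirJacobian a b β q x).map Complex.ofReal)) μ ∧
      ‖μ‖ = 1 := by
  constructor
  · apply Module.End.hasEigenvalue_of_hasEigenvector (x := ![1,0,0])
    constructor
    · rw [Module.End.mem_eigenspace_iff]
      funext i
      simp [seirJacobian, Matrix.toLin'_apply, Matrix.mulVec, dotProduct,
        Fin.sum_univ_three]
      fin_cases i <;> simp [Matrix.vecHead, Matrix.vecTail]
    · intro h
      have := congrFun h 0
      simp at this
  · refine ⟨1, ?_, by simp⟩
    apply Module.End.hasEigenvalue_of_hasEigenvector (x := ![1,0,0])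
    constructor
    · rw [Module.End.mem_eigenspace_iff]
      funext i
      simp [seirJacobian, Matrix.toLin'_apply, Matrix.mulVec, dotProduct,
        Fin.sum_univ_three]
      fin_cases i <;> simp [Matrix.vecHead, Matrix.vecTail]
    · intro h
      have := congrFun h 0
      simp at this
end

section
/- Let μ₂ = 1 - (a + b - qαβ - √D)/2 with D = (b - a + qαβ)² + 4aαβ, where a, b ∈ (0,1], β ∈ (0,1], βq ≤ 1, α ∈ [0,1]. Then |μ₂| = 1 if α = ab/(β(a+bq)), |μ₂| < 1 if α < ab/(β(a+bq)), and |μ₂| > 1 if α > ab/(β(a+bq)). -/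
set_option maxHeartbeats 1600000 in
theorem stmt_9 (a b β q α : ℝ) (ha : 0 < a) (ha1 : a ≤ 1) (hb : 0 < b) (hb1 : b ≤ 1)
    (hβ : 0 < β) (hβ1 : β ≤ 1) (hq : 0 ≤ q) (hβq : β * q ≤ 1)
    (hα : α ∈ Set.Icc (0:ℝ) 1) :
    (α = a * b / (β * (a + b * q)) →
      |1 - (a + b - q * α * β -
        Real.sqrt ((b - a + q * α * β) ^ 2 + 4 * a * α * β)) / 2| = 1) ∧
    (α < a * b / (β * (a + b * q)) →
      |1 - (a + b - q * α * β -
        Real.sqrt ((b - a + q * α * β) ^ 2 + 4 * a * α * β)) / 2| < 1) ∧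
    (α > a * b / (β * (a + b * q)) →
      |1 - (a + b - q * α * β -
        Real.sqrt ((b - a + q * α * β) ^ 2 + 4 * a * α * β)) / 2| > 1) := by
  obtain ⟨hα0, hα1⟩ := hα
  have hden : 0 < β * (a + b * q) := by positivity
  set s : ℝ := a + b - q * α * β with hs_def
  set D : ℝ := (b - a + q * α * β) ^ 2 + 4 * a * α * β with hD_def
  have hD0 : 0 ≤ D := by positivity
  have hkey : D = s ^ 2 + 4 * (α * (β * (a + b * q)) - a * b) := by
    simp only [hs_def, hD_def]; ring
  have ht0 : 0 ≤ q * α * β := by positivity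
  have hs2 : s ≤ 2 := by simp only [hs_def]; linarith
  set r : ℝ := Real.sqrt D with hr_def
  have hr0 : 0 ≤ r := Real.sqrt_nonneg D
  have hr2 : r ^ 2 = D := Real.sq_sqrt hD0
  refine ⟨?_, ?_, ?_⟩
  · intro h
    have heq : α * (β * (a + b * q)) = a * b := by
      field_simp at h; linarith [h]
    have hDs : D = s ^ 2 := by rw [hkey, heq]; ring
    have hs0 : 0 ≤ s := by
      have hq' : q * α * β * (a + b * q) = q * (a * b) := by nlinarith [heq]
      have hapq : 0 < a + b * q := by positivity
      nlinarith [hq', hapq, mul_pos ha hb, mul_nonneg (mul_nonneg hb.le hb.le) hq, sq_nonneg a]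
    have hrs : r = s := by rw [hr_def, hDs, Real.sqrt_sq hs0]
    rw [hrs]; simp
  · intro h
    have hlt : α * (β * (a + b * q)) < a * b := (lt_div_iff₀ hden).mp h
    have hDs : D < s ^ 2 := by rw [hkey]; nlinarith
    have hs0 : 0 ≤ s := by
      have hq' : q * α * β * (a + b * q) ≤ q * (a * b) :=
        by nlinarith [mul_le_mul_of_nonneg_left hlt.le hq]
      have hapq : 0 < a + b * q := by positivity
      nlinarith [hq', hapq, mul_pos ha hb, mul_nonneg (mul_nonneg hb.le hb.le) hq, sq_nonneg a]
    have hrs : r < s := by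
      have h1 : r < Real.sqrt (s ^ 2) := Real.sqrt_lt_sqrt hD0 hDs
      rwa [Real.sqrt_sq hs0] at h1
    rw [abs_lt]; constructor <;> [linarith; linarith]
  · intro h
    have hgt : a * b < α * (β * (a + b * q)) := (div_lt_iff₀ hden).mp h
    have hDs : s ^ 2 < D := by rw [hkey]; nlinarith
    have hrs : s < r := by
      have h1 : Real.sqrt (s ^ 2) < r := Real.sqrt_lt_sqrt (sq_nonneg s) hDs
      rw [Real.sqrt_sq_eq_abs] at h1
      exact lt_of_le_of_lt (le_abs_self s) h1
    have : (1:ℝ) < 1 - (s - r) / 2 := by linarith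
    rw [abs_of_pos (by linarith)]; linarith
end

section
/- Assume a, b, β ∈ (0,1], β > 0, q ≥ 0, βq ≤ 1. For any non-fixed initial point λ⁰ ∈ S³, the trajectory Vⁿ(λ⁰) converges to a point (x̄, 0, 0, 1-x̄) with x̄ < ab/(β(a+bq)). -/
lemma seir_mem (a b β q : ℝ) (ha : 0 < a) (ha1 : a ≤ 1) (hb : 0 < b) (hb1 : b ≤ 1)
    (hβ : 0 < β) (hβ1 : β ≤ 1) (hq : 0 ≤ q) (hβq : β * q ≤ 1)
    {p : ℝ × ℝ × ℝ × ℝ} (hp : p ∈ Simplex3) : seirV a b β q p ∈ Simplex3 := by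
  obtain ⟨h1, h2, h3, h4, h5⟩ := hp
  have e1 : 0 ≤ (1 - β) * (p.1 * p.2.2.1) :=
    mul_nonneg (by linarith) (mul_nonneg h1 h3)
  have e2 : 0 ≤ (1 - β * q) * (p.1 * p.2.1) :=
    mul_nonneg (by linarith) (mul_nonneg h1 h2)
  have e3 : 0 ≤ p.1 * (1 - p.2.1 - p.2.2.1) := mul_nonneg h1 (by linarith)
  refine ⟨?_, ?_, ?_, ?_, ?_⟩ <;> simp only [seirV]
  · nlinarith [e1, e2, e3]
  · nlinarith [mul_nonneg (mul_nonneg hβ.le h1) h3,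
      mul_nonneg (mul_nonneg (mul_nonneg hβ.le h1) hq) h2, mul_nonneg h2 (sub_nonneg.2 ha1)]
  · nlinarith [mul_nonneg h3 (sub_nonneg.2 hb1), mul_nonneg ha.le h2]
  · nlinarith [mul_nonneg hb.le h3]
  · linarith

theorem stmt_18 (a b β q : ℝ) (ha : 0 < a) (ha1 : a ≤ 1) (hb : 0 < b) (hb1 : b ≤ 1)
    (hβ : 0 < β) (hβ1 : β ≤ 1) (hq : 0 ≤ q) (hβq : β * q ≤ 1)
    (lam0 : ℝ × ℝ × ℝ × ℝ) (hlam : lam0 ∈ Simplex3)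
    (hnotfix : seirV a b β q lam0 ≠ lam0) :
    ∃ xbar : ℝ, xbar < a * b / (β * (a + b * q)) ∧
      Filter.Tendsto (fun n => (seirV a b β q)^[n] lam0) Filter.atTop
        (nhds (xbar, 0, 0, 1 - xbar)) := by
  set p : ℕ → ℝ × ℝ × ℝ × ℝ := fun n => (seirV a b β q)^[n] lam0 with hp
  set X : ℕ → ℝ := fun n => (p n).1 with hX
  set Y : ℕ → ℝ := fun n => (p n).2.1 with hY
  set U : ℕ → ℝ := fun n => (p n).2.2.1 with hU
  set W : ℕ → ℝ := fun n => (p n).2.2.2 with hW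
  have hrec : ∀ n, p (n + 1) = seirV a b β q (p n) := fun n =>
    Function.iterate_succ_apply' _ n lam0
  have hmem : ∀ n, p n ∈ Simplex3 := by
    intro n
    induction n with
    | zero => exact hlam
    | succ k ih => rw [hrec]; exact seir_mem a b β q ha ha1 hb hb1 hβ hβ1 hq hβq ih
  have hXr : ∀ n, X (n + 1) = X n - β * X n * (U n + q * Y n) := by
    intro n; simp only [hX, hY, hU, hrec n]; rfl
  have hYr : ∀ n, Y (n + 1) = Y n - a * Y n + β * X n * (U n + q * Y n) := by
    intro n; simp only [hX, hY, hU, hrec n]; rfl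
  have hUr : ∀ n, U (n + 1) = U n - b * U n + a * Y n := by
    intro n; simp only [hY, hU, hrec n]; rfl
  have hWr : ∀ n, W (n + 1) = W n + b * U n := by
    intro n; simp only [hW, hU, hrec n]; rfl
  have hX0 : ∀ n, 0 ≤ X n := fun n => (hmem n).1
  have hY0 : ∀ n, 0 ≤ Y n := fun n => (hmem n).2.1
  have hU0 : ∀ n, 0 ≤ U n := fun n => (hmem n).2.2.1
  have hW0 : ∀ n, 0 ≤ W n := fun n => (hmem n).2.2.2.1
  have hsum : ∀ n, X n + Y n + U n + W n = 1 := fun n => (hmem n).2.2.2.2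
  -- X is antitone, bounded below
  have hXanti : Antitone X := by
    apply antitone_nat_of_succ_le
    intro n
    have := hXr n
    nlinarith [mul_nonneg (mul_nonneg hβ.le (hX0 n)) (hU0 n),
      mul_nonneg (mul_nonneg (mul_nonneg hβ.le (hX0 n)) hq) (hY0 n)]
  have hXbdd : BddBelow (Set.range X) := ⟨0, by rintro _ ⟨n, rfl⟩; exact hX0 n⟩
  set xbar : ℝ := ⨅ n, X n with hxbar
  have hXlim : Filter.Tendsto X Filter.atTop (nhds xbar) :=
    tendsto_atTop_ciInf hXanti hXbdd
  have hxbarle : ∀ n, xbar ≤ X n := fun n => ciInf_le hXbdd n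
  have hxbar0 : 0 ≤ xbar := le_ciInf hX0
  -- W is monotone, bounded above
  have hWmono : Monotone W := by
    apply monotone_nat_of_le_succ
    intro n
    have := hWr n
    nlinarith [mul_nonneg hb.le (hU0 n)]
  have hWbdd : BddAbove (Set.range W) := by
    refine ⟨1, ?_⟩; rintro _ ⟨n, rfl⟩
    have := hsum n; have := hX0 n; have := hY0 n; have := hU0 n; linarith
  have hWlim : Filter.Tendsto W Filter.atTop (nhds (⨆ n, W n)) :=
    tendsto_atTop_ciSup hWmono hWbdd
  have hshift : Filter.Tendsto (fun n => W (n + 1)) Filter.atTop (nhds (⨆ n, W n)) :=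
    hWlim.comp (Filter.tendsto_add_atTop_nat 1)
  -- U → 0
  have hUlim : Filter.Tendsto U Filter.atTop (nhds 0) := by
    have h1 : Filter.Tendsto (fun n => (W (n + 1) - W n) / b) Filter.atTop
        (nhds (((⨆ n, W n) - ⨆ n, W n) / b)) := (hshift.sub hWlim).div_const b
    rw [sub_self, zero_div] at h1
    refine h1.congr fun n => ?_
    rw [hWr n]; field_simp; ring
  have hUshift : Filter.Tendsto (fun n => U (n + 1)) Filter.atTop (nhds 0) :=
    hUlim.comp (Filter.tendsto_add_atTop_nat 1)
  -- Y → 0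
  have hYlim : Filter.Tendsto Y Filter.atTop (nhds 0) := by
    have h1 : Filter.Tendsto (fun n => (U (n + 1) - (1 - b) * U n) / a) Filter.atTop
        (nhds ((0 - (1 - b) * 0) / a)) :=
      (hUshift.sub (hUlim.const_mul (1 - b))).div_const a
    rw [mul_zero, sub_zero, zero_div] at h1
    refine h1.congr fun n => ?_
    rw [hUr n]; field_simp; ring
  -- W → 1 - xbar
  have hWlim' : Filter.Tendsto W Filter.atTop (nhds (1 - xbar)) := by
    have h1 : Filter.Tendsto (fun n => 1 - X n - Y n - U n) Filter.atTop
        (nhds (1 - xbar - 0 - 0)) :=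
      (((tendsto_const_nhds).sub hXlim).sub hYlim).sub hUlim
    rw [sub_zero, sub_zero] at h1
    refine h1.congr fun n => ?_
    have := hsum n; linarith
  -- strict inequality via Lyapunov function
  have hden : 0 < β * (a + b * q) := by positivity
  have hkey : xbar < a * b / (β * (a + b * q)) := by
    by_contra hc
    push_neg at hc
    have hcb : a * b ≤ β * (a + b * q) * xbar := by
      rw [div_le_iff₀ hden] at hc; linarith
    have hxbarpos : 0 < xbar := by
      rcases lt_or_ge 0 xbar with h | h
      · exact h
      · exfalso; nlinarith
    set L : ℕ → ℝ := fun n => b * Y n + β * xbar * U n with hL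
    have hLmono : Monotone L := by
      apply monotone_nat_of_le_succ
      intro n
      simp only [hL]
      rw [hYr n, hUr n]
      have h1 : 0 ≤ b * β * (X n - xbar) * (U n + q * Y n) :=
        mul_nonneg (mul_nonneg (mul_nonneg hb.le hβ.le) (sub_nonneg.2 (hxbarle n)))
          (add_nonneg (hU0 n) (mul_nonneg hq (hY0 n)))
      have h2 : 0 ≤ Y n * (β * xbar * (a + b * q) - a * b) := by
        nlinarith [hY0 n]
      nlinarith [h1, h2]
    have hLlim : Filter.Tendsto L Filter.atTop (nhds 0) := by
      have h1 : Filter.Tendsto (fun n => b * Y n + β * xbar * U n) Filter.atTop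
          (nhds (b * 0 + β * xbar * 0)) := (hYlim.const_mul b).add (hUlim.const_mul _)
      rw [mul_zero, mul_zero, add_zero] at h1
      exact h1
    have hL0le : L 0 ≤ 0 :=
      ge_of_tendsto hLlim (Filter.Eventually.of_forall fun n => hLmono (Nat.zero_le n))
    have hY00 : Y 0 = 0 := by
      have := hL0le
      simp only [hL] at this
      nlinarith [hY0 0, hU0 0, mul_pos hβ hxbarpos]
    have hU00 : U 0 = 0 := by
      have := hL0le
      simp only [hL] at this
      nlinarith [hY0 0, hU0 0, mul_pos hβ hxbarpos]
    apply hnotfix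
    have hp0 : p 0 = lam0 := rfl
    have hy0 : lam0.2.1 = 0 := by rw [← hp0]; exact hY00
    have hu0 : lam0.2.2.1 = 0 := by rw [← hp0]; exact hU00
    simp only [seirV, Prod.ext_iff]
    refine ⟨?_, ?_, ?_, ?_⟩ <;> simp [hy0, hu0]
  refine ⟨xbar, hkey, ?_⟩
  exact hXlim.prodMk_nhds (hYlim.prodMk_nhds (hUlim.prodMk_nhds hWlim'))
end
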